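/- Let γ > 0 and κ > 1 be fixed real numbers. The MF2 steady-state infected–infected correlation C_II(β) = (βκ − γ)(βκ(κ−1) − γ)/(βκ²(β(κ−1) − γ)) tends to +∞ as β tends to γ/(κ−1) from above; that is, the infected–infected correlation of the pair approximation diverges at the epidemic threshold. -/

import Mathlib

open Filter Topology

/-- The MF2 steady-state infected–infected correlation diverges at the epidemic
threshold: `C_II(β) → +∞` as `β → γ/(κ-1)` from above. -/
theorem mf2_CII_diverges_at_threshold (γ κ : ℝ) (hγ : 0 < γ) (hκ : 1 < κ) :
    Tendsto
      (fun β : ℝ =>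
        (β * κ - γ) * (β * κ * (κ - 1) - γ) / (β * κ ^ 2 * (β * (κ - 1) - γ)))
      (𝓝[>] (γ / (κ - 1))) atTop := by
  have hκ1 : (0:ℝ) < κ - 1 := by linarith
  set β₀ := γ / (κ - 1) with hβ₀
  have hβ₀pos : 0 < β₀ := div_pos hγ hκ1
  have hβ₀γ : β₀ * (κ - 1) = γ := div_mul_cancel₀ γ (ne_of_gt hκ1)
  -- numerator tends to a positive constant
  have hnum : Tendsto (fun β : ℝ => (β * κ - γ) * (β * κ * (κ - 1) - γ))
      (𝓝[>] β₀) (𝓝 ((β₀ * κ - γ) * (β₀ * κ * (κ - 1) - γ))) := by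
    apply Tendsto.mono_left _ nhdsWithin_le_nhds
    exact (Continuous.tendsto (by continuity) β₀)
  have hcpos : 0 < (β₀ * κ - γ) * (β₀ * κ * (κ - 1) - γ) := by
    have h1 : 0 < β₀ * κ - γ := by nlinarith
    have h2 : 0 < β₀ * κ * (κ - 1) - γ := by nlinarith
    exact mul_pos h1 h2
  -- denominator tends to 0 from the right
  have hden : Tendsto (fun β : ℝ => β * κ ^ 2 * (β * (κ - 1) - γ))
      (𝓝[>] β₀) (𝓝[>] 0) := by
    apply tendsto_nhdsWithin_of_tendsto_nhds_of_eventually_within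
    · have : Tendsto (fun β : ℝ => β * κ ^ 2 * (β * (κ - 1) - γ)) (𝓝 β₀)
          (𝓝 (β₀ * κ ^ 2 * (β₀ * (κ - 1) - γ))) := Continuous.tendsto (by continuity) β₀
      simpa [hβ₀γ] using this.mono_left nhdsWithin_le_nhds
    · filter_upwards [self_mem_nhdsWithin] with β hβ
      have hβ' : β₀ < β := hβ
      have hβpos : 0 < β := lt_trans hβ₀pos hβ'
      have : 0 < β * (κ - 1) - γ := by nlinarith
      exact Set.mem_Ioi.mpr (by positivity)
  have := Tendsto.pos_mul_atTop hcpos hnum hden.inv_tendsto_nhdsGT_zero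
  refine this.congr fun β => ?_
  simp [div_eq_mul_inv]
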